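/- Let 0 ≤ c₃ < c₁ and 0 ≤ c₄ < c₂, let f : [c₄,∞) → [0,∞) and g : [c₃,∞) → [0,∞) be continuous, nondecreasing, strictly positive on (c₄,∞) and (c₃,∞) respectively, with ∫_{c₄}^{∞} f(s) ds = ∫_{c₃}^{∞} g(θ) dθ = ∞. Set F(z) = ∫_{c₄}^{z} f(s) ds and G(w) = ∫_{c₃}^{w} g(θ) dθ, with inverse functions F⁻¹ and G⁻¹. Let 0 < ε < 1 < K with ε·G(c₁) ≤ F(c₂) ≤ K·G(c₁). If ∫_{c₁}^{∞} ds / f(F⁻¹(K·G(s))) = ∞ and ∫_{c₂}^{∞} dθ / g(G⁻¹(F(θ)/ε)) = ∞, then every solution of w' = f(z), z' = g(w) with w(0) = c₁, z(0) = c₂ and w ≥ c₃, z ≥ c₄ on a finite interval [0,T) is bounded on [0,T); hence the solution extends globally to [0,∞). -/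

import Mathlib

open Set MeasureTheory Filter

private lemma pim {f : ℝ → ℝ} {c a b : ℝ} (hf : ContinuousOn f (Ici c)) (ha : c ≤ a)
    (hb : c ≤ b) : IntervalIntegrable f volume a b :=
  (hf.mono fun x hx => le_trans (le_min ha hb) hx.1).intervalIntegrable

private lemma padd {f : ℝ → ℝ} {c a b : ℝ} (hf : ContinuousOn f (Ici c)) (ha : c ≤ a)
    (hb : c ≤ b) : (∫ s in c..b, f s) - (∫ s in c..a, f s) = ∫ s in a..b, f s := by
  rw [← intervalIntegral.integral_add_adjacent_intervals (pim hf le_rfl ha) (pim hf ha hb)]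
  ring

private lemma pmono {f : ℝ → ℝ} {c : ℝ} (hf : ContinuousOn f (Ici c))
    (hnn : ∀ s ∈ Ici c, 0 ≤ f s) :
    MonotoneOn (fun x => ∫ s in c..x, f s) (Ici c) := by
  intro a ha b hb hab
  have h1 := padd hf ha hb
  have h2 : 0 ≤ ∫ s in a..b, f s :=
    intervalIntegral.integral_nonneg hab (fun u hu => hnn u (le_trans ha hu.1))
  simp only
  linarith

private lemma pstrict {f : ℝ → ℝ} {c : ℝ} (hf : ContinuousOn f (Ici c))
    (hpos : ∀ s ∈ Ioi c, 0 < f s) {a b : ℝ} (ha : c ≤ a) (hab : a < b) :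
    (∫ s in c..a, f s) < ∫ s in c..b, f s := by
  have h1 := padd hf ha (ha.trans hab.le)
  have h2 : 0 < ∫ s in a..b, f s :=
    intervalIntegral.intervalIntegral_pos_of_pos_on (pim hf ha (ha.trans hab.le))
      (fun x hx => hpos x (lt_of_le_of_lt ha hx.1)) hab
  linarith

private lemma phd {f : ℝ → ℝ} {c x : ℝ} (hf : ContinuousOn f (Ici c)) (hx : c < x) :
    HasDerivAt (fun u => ∫ s in c..u, f s) (f x) x :=
  intervalIntegral.integral_hasDerivAt_right (pim hf le_rfl hx.le)
    ((hf.mono Ioi_subset_Ici_self).stronglyMeasurableAtFilter isOpen_Ioi x hx)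
    (hf.continuousAt (Ici_mem_nhds hx))

private lemma bound_w_aux
    (c₁ c₂ c₃ c₄ K T : ℝ)
    (hc₃₁ : c₃ < c₁) (hc₄₂ : c₄ < c₂)
    (f g : ℝ → ℝ)
    (hf_cont : ContinuousOn f (Ici c₄)) (hg_cont : ContinuousOn g (Ici c₃))
    (hf_nonneg : ∀ s ∈ Ici c₄, 0 ≤ f s) (hg_nonneg : ∀ s ∈ Ici c₃, 0 ≤ g s)
    (hf_mono : MonotoneOn f (Ici c₄))
    (hf_pos : ∀ s ∈ Ioi c₄, 0 < f s) (hg_pos : ∀ s ∈ Ioi c₃, 0 < g s)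
    (Finv : ℝ → ℝ)
    (hFinv_mem : ∀ y ∈ Ici (0:ℝ), Finv y ∈ Ici c₄)
    (hFinv_right : ∀ y ∈ Ici (0:ℝ), (∫ s in c₄..Finv y, f s) = y)
    (hFinv_left : ∀ x ∈ Ici c₄, Finv (∫ s in c₄..x, f s) = x)
    (hK : 1 ≤ K)
    (hFG : (∫ s in c₄..c₂, f s) ≤ K * ∫ θ in c₃..c₁, g θ)
    (hdiv : ¬ IntegrableOn (fun s => 1 / f (Finv (K * ∫ θ in c₃..s, g θ))) (Ici c₁))
    (w z : ℝ → ℝ)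
    (hw0 : w 0 = c₁) (hz0 : z 0 = c₂)
    (hw_ge : ∀ t ∈ Ico (0:ℝ) T, c₃ ≤ w t)
    (hz_ge : ∀ t ∈ Ico (0:ℝ) T, c₄ ≤ z t)
    (hw' : ∀ t ∈ Ico (0:ℝ) T, HasDerivAt w (f (z t)) t)
    (hz' : ∀ t ∈ Ico (0:ℝ) T, HasDerivAt z (g (w t)) t) :
    ∃ C : ℝ, ∀ t ∈ Ico (0:ℝ) T, w t ≤ C := by
  rcases le_or_gt T 0 with hT | hT
  · exact ⟨c₁, fun t ht => absurd (lt_of_le_of_lt ht.1 ht.2) (not_lt.2 hT)⟩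
  have h0I : (0:ℝ) ∈ Ico (0:ℝ) T := ⟨le_refl _, hT⟩
  set Fn : ℝ → ℝ := fun x => ∫ s in c₄..x, f s with hFn
  set Gn : ℝ → ℝ := fun x => ∫ θ in c₃..x, g θ with hGn
  -- monotonicity of w and z
  have hzmono : MonotoneOn z (Ico (0:ℝ) T) := by
    apply monotoneOn_of_deriv_nonneg (convex_Ico 0 T)
      (fun t ht => (hz' t ht).continuousAt.continuousWithinAt)
    · rw [interior_Ico]
      exact fun t ht => ((hz' t (Ioo_subset_Ico_self ht)).differentiableAt).differentiableWithinAt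
    · rw [interior_Ico]
      intro x hx
      rw [(hz' x (Ioo_subset_Ico_self hx)).deriv]
      exact hg_nonneg _ (hw_ge x (Ioo_subset_Ico_self hx))
  have hwmono : MonotoneOn w (Ico (0:ℝ) T) := by
    apply monotoneOn_of_deriv_nonneg (convex_Ico 0 T)
      (fun t ht => (hw' t ht).continuousAt.continuousWithinAt)
    · rw [interior_Ico]
      exact fun t ht => ((hw' t (Ioo_subset_Ico_self ht)).differentiableAt).differentiableWithinAt
    · rw [interior_Ico]
      intro x hx
      rw [(hw' x (Ioo_subset_Ico_self hx)).deriv]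
      exact hf_nonneg _ (hz_ge x (Ioo_subset_Ico_self hx))
  have hzI : ∀ t ∈ Ico (0:ℝ) T, c₂ ≤ z t := fun t ht => hz0 ▸ hzmono h0I ht ht.1
  have hwI : ∀ t ∈ Ico (0:ℝ) T, c₁ ≤ w t := fun t ht => hw0 ▸ hwmono h0I ht ht.1
  have hz4 : ∀ t ∈ Ico (0:ℝ) T, c₄ < z t := fun t ht => lt_of_lt_of_le hc₄₂ (hzI t ht)
  have hw3 : ∀ t ∈ Ico (0:ℝ) T, c₃ < w t := fun t ht => lt_of_lt_of_le hc₃₁ (hwI t ht)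
  -- invariant E = Fn (z t) - Gn (w t)
  have hEd : ∀ t ∈ Ico (0:ℝ) T, HasDerivAt (fun t => Fn (z t) - Gn (w t)) 0 t := by
    intro t ht
    have h1 : HasDerivAt (fun t => Fn (z t)) (f (z t) * g (w t)) t :=
      (phd hf_cont (hz4 t ht)).comp t (hz' t ht)
    have h2 : HasDerivAt (fun t => Gn (w t)) (g (w t) * f (z t)) t :=
      (phd hg_cont (hw3 t ht)).comp t (hw' t ht)
    have h3 := h1.sub h2
    rw [mul_comm (g (w t)), sub_self] at h3
    exact h3
  have hEconst : ∀ t ∈ Ico (0:ℝ) T, Fn (z t) - Gn (w t) = Fn c₂ - Gn c₁ := by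
    have hEc : ContinuousOn (fun t => Fn (z t) - Gn (w t)) (Ico (0:ℝ) T) :=
      fun t ht => (hEd t ht).continuousAt.continuousWithinAt
    have hEdiff : DifferentiableOn ℝ (fun t => Fn (z t) - Gn (w t)) (interior (Ico (0:ℝ) T)) := by
      rw [interior_Ico]
      exact fun t ht => ((hEd t (Ioo_subset_Ico_self ht)).differentiableAt).differentiableWithinAt
    have hEm : MonotoneOn (fun t => Fn (z t) - Gn (w t)) (Ico (0:ℝ) T) := by
      apply monotoneOn_of_deriv_nonneg (convex_Ico 0 T) hEc hEdiff
      rw [interior_Ico]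
      intro x hx
      rw [(hEd x (Ioo_subset_Ico_self hx)).deriv]
    have hEa : AntitoneOn (fun t => Fn (z t) - Gn (w t)) (Ico (0:ℝ) T) := by
      apply antitoneOn_of_deriv_nonpos (convex_Ico 0 T) hEc hEdiff
      rw [interior_Ico]
      intro x hx
      rw [(hEd x (Ioo_subset_Ico_self hx)).deriv]
    intro t ht
    have h1 := hEm h0I ht ht.1
    have h2 := hEa h0I ht ht.1
    have : Fn (z t) - Gn (w t) = Fn (z 0) - Gn (w 0) := le_antisymm h2 h1
    rwa [hz0, hw0] at this
  -- basic facts about Fn, Gn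
  have hGc₁pos : 0 < Gn c₁ := by
    have := pstrict hg_cont hg_pos (le_refl c₃) hc₃₁
    simpa [hGn, intervalIntegral.integral_same] using this
  have hGwt : ∀ t ∈ Ico (0:ℝ) T, Gn c₁ ≤ Gn (w t) := fun t ht =>
    pmono hg_cont hg_nonneg (le_of_lt hc₃₁) (hc₃₁.le.trans (hwI t ht)) (hwI t ht)
  have hFz_le : ∀ t ∈ Ico (0:ℝ) T, Fn (z t) ≤ K * Gn (w t) := by
    intro t ht
    have h1 := hEconst t ht
    have h2 := hGwt t ht
    nlinarith [hGc₁pos]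
  have hKGpos : ∀ t ∈ Ico (0:ℝ) T, 0 < K * Gn (w t) := fun t ht =>
    mul_pos (by linarith) (lt_of_lt_of_le hGc₁pos (hGwt t ht))
  -- z t ≤ Finv (K * Gn (w t))
  have hz_le : ∀ t ∈ Ico (0:ℝ) T, z t ≤ Finv (K * Gn (w t)) := by
    intro t ht
    by_contra hcon
    push_neg at hcon
    have hy : (0:ℝ) ≤ K * Gn (w t) := (hKGpos t ht).le
    have h1 : Fn (Finv (K * Gn (w t))) < Fn (z t) :=
      pstrict hf_cont hf_pos (hFinv_mem _ hy) hcon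
    have h2 : Fn (Finv (K * Gn (w t))) = K * Gn (w t) := hFinv_right _ hy
    have h3 := hFz_le t ht
    linarith
  -- Finv of positive values is > c₄
  have hFinv_gt : ∀ y : ℝ, 0 < y → c₄ < Finv y := by
    intro y hy
    rcases lt_or_eq_of_le (show c₄ ≤ Finv y from hFinv_mem y hy.le) with h | h
    · exact h
    · exfalso
      have := hFinv_right y hy.le
      rw [← h, intervalIntegral.integral_same] at this
      linarith
  -- continuity of Finv on Ioi 0
  have hFinv_mono : MonotoneOn Finv (Ici (0:ℝ)) := by
    intro y1 h1 y2 h2 h12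
    by_contra hcon
    push_neg at hcon
    have := pstrict hf_cont hf_pos (hFinv_mem y2 h2) hcon
    rw [hFinv_right y1 h1, hFinv_right y2 h2] at this
    linarith
  have hFinv_image : Finv '' (Ioi (0:ℝ)) = Ioi c₄ := by
    ext x
    constructor
    · rintro ⟨y, hy, rfl⟩
      exact hFinv_gt y hy
    · intro hx
      have hpos : 0 < Fn x := by
        have := pstrict hf_cont hf_pos (le_refl c₄) hx
        simpa [hFn, intervalIntegral.integral_same] using this
      exact ⟨Fn x, hpos, hFinv_left x (mem_Ici.2 (le_of_lt hx))⟩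
  have hFinv_contAt : ∀ y : ℝ, 0 < y → ContinuousAt Finv y := by
    intro y hy
    apply continuousAt_of_monotoneOn_of_image_mem_nhds
      (hFinv_mono.mono (Ioi_subset_Ici_self : Ioi (0:ℝ) ⊆ Ici 0)) (Ioi_mem_nhds hy)
    rw [hFinv_image]
    exact Ioi_mem_nhds (hFinv_gt y hy)
  -- the comparison function
  set h : ℝ → ℝ := fun s => f (Finv (K * Gn (max s c₁))) with hh
  have hGpos_max : ∀ s : ℝ, 0 < K * Gn (max s c₁) := by
    intro s
    have h1 : Gn c₁ ≤ Gn (max s c₁) :=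
      pmono hg_cont hg_nonneg (le_of_lt hc₃₁) (hc₃₁.le.trans (le_max_right s c₁))
        (le_max_right s c₁)
    exact mul_pos (by linarith) (lt_of_lt_of_le hGc₁pos h1)
  have hhpos : ∀ s : ℝ, 0 < h s := fun s =>
    hf_pos _ (hFinv_gt _ (hGpos_max s))
  have hhcont : Continuous h := by
    rw [continuous_iff_continuousAt]
    intro s
    have hmax : ContinuousAt (fun s : ℝ => max s c₁) s := continuous_id.max continuous_const |>.continuousAt
    have hGat : ContinuousAt Gn (max s c₁) :=
      (phd hg_cont (lt_of_lt_of_le hc₃₁ (le_max_right s c₁))).continuousAt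
    have hFinvAt : ContinuousAt Finv (K * Gn (max s c₁)) := hFinv_contAt _ (hGpos_max s)
    have hfat : ContinuousAt f (Finv (K * Gn (max s c₁))) :=
      hf_cont.continuousAt (Ici_mem_nhds (hFinv_gt _ (hGpos_max s)))
    have c1 : ContinuousAt (fun s : ℝ => Gn (max s c₁)) s :=
      ContinuousAt.comp (f := fun u : ℝ => max u c₁) hGat hmax
    have c2 : ContinuousAt (fun s : ℝ => K * Gn (max s c₁)) s := continuousAt_const.mul c1
    have c3 : ContinuousAt (fun s : ℝ => Finv (K * Gn (max s c₁))) s :=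
      ContinuousAt.comp (f := fun u : ℝ => K * Gn (max u c₁)) hFinvAt c2
    exact ContinuousAt.comp (f := fun u : ℝ => Finv (K * Gn (max u c₁))) hfat c3
  have hinv_cont : Continuous fun s => (h s)⁻¹ := hhcont.inv₀ (fun s => (hhpos s).ne')
  set Φ : ℝ → ℝ := fun x => ∫ s in c₁..x, (h s)⁻¹ with hΦ
  have hΦd : ∀ x : ℝ, HasDerivAt Φ (h x)⁻¹ x := fun x =>
    intervalIntegral.integral_hasDerivAt_right (hinv_cont.intervalIntegrable _ _)
      (hinv_cont.stronglyMeasurableAtFilter _ _) hinv_cont.continuousAt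
  have hΦmono : Monotone Φ := by
    apply monotone_of_deriv_nonneg (fun x => (hΦd x).differentiableAt)
    intro x
    rw [(hΦd x).deriv]
    exact inv_nonneg.2 (hhpos x).le
  -- Φ (w t) ≤ t
  have hψd : ∀ t ∈ Ico (0:ℝ) T, HasDerivAt (fun t => Φ (w t) - t)
      ((h (w t))⁻¹ * f (z t) - 1) t := by
    intro t ht
    exact ((hΦd (w t)).comp t (hw' t ht)).sub (hasDerivAt_id t)
  have hψnonpos : ∀ t ∈ Ico (0:ℝ) T, (h (w t))⁻¹ * f (z t) - 1 ≤ 0 := by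
    intro t ht
    have hle : f (z t) ≤ h (w t) := by
      have hmax : max (w t) c₁ = w t := max_eq_left (hwI t ht)
      rw [hh]
      simp only [hmax]
      exact hf_mono (hz_ge t ht) (hFinv_mem _ (hKGpos t ht).le) (hz_le t ht)
    have hp := hhpos (w t)
    rw [mul_comm, ← div_eq_mul_inv]
    have := (div_le_one hp).mpr hle
    linarith
  have hψanti : AntitoneOn (fun t => Φ (w t) - t) (Ico (0:ℝ) T) := by
    apply antitoneOn_of_deriv_nonpos (convex_Ico 0 T)
      (fun t ht => (hψd t ht).continuousAt.continuousWithinAt)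
    · rw [interior_Ico]
      exact fun t ht => ((hψd t (Ioo_subset_Ico_self ht)).differentiableAt).differentiableWithinAt
    · rw [interior_Ico]
      intro x hx
      rw [(hψd x (Ioo_subset_Ico_self hx)).deriv]
      exact hψnonpos x (Ioo_subset_Ico_self hx)
  have hΦwt : ∀ t ∈ Ico (0:ℝ) T, Φ (w t) ≤ t := by
    intro t ht
    have := hψanti h0I ht ht.1
    simp only [hw0, hΦ, intervalIntegral.integral_same, sub_zero] at this
    linarith
  -- there is R with T ≤ Φ R
  have hR : ∃ R : ℝ, T ≤ Φ R := by
    by_contra hcon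
    push_neg at hcon
    have hint : IntegrableOn (fun s => (h s)⁻¹) (Ioi c₁) := by
      apply integrableOn_Ioi_of_intervalIntegral_norm_bounded T c₁
        (fun i : ℝ => hinv_cont.integrableOn_Ioc) tendsto_id
      filter_upwards with i
      have : (fun s => ‖(h s)⁻¹‖) = fun s => (h s)⁻¹ :=
        funext fun s => Real.norm_of_nonneg (inv_nonneg.2 (hhpos s).le)
      rw [this]
      exact (hcon i).le
    have hint2 : IntegrableOn (fun s => (h s)⁻¹) (Ici c₁) :=
      (integrableOn_Ici_iff_integrableOn_Ioi (f := fun s => (h s)⁻¹)).mpr hint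
    apply hdiv
    apply hint2.congr_fun _ measurableSet_Ici
    intro s hs
    simp only [hh, hGn]
    rw [max_eq_left (hs : c₁ ≤ s), one_div]
  obtain ⟨R, hRT⟩ := hR
  refine ⟨R, fun t ht => ?_⟩
  by_contra hcon
  push_neg at hcon
  have h1 : Φ R ≤ Φ (w t) := hΦmono hcon.le
  have h2 := hΦwt t ht
  have h3 := ht.2
  linarith

/-- Theorem A′, part 1 (global-existence case) of the paper: under the divergence
conditions `∫_{c₁}^∞ ds / f(F⁻¹(K G(s))) = ∞` and `∫_{c₂}^∞ dθ / g(G⁻¹(F(θ)/ε)) = ∞`,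
every solution of `w' = f(z)`, `z' = g(w)` on a finite interval `[0,T)` is bounded. -/
theorem global_existence_thmAprime
    (c₁ c₂ c₃ c₄ ε K T : ℝ)
    (hc₃ : 0 ≤ c₃) (hc₃₁ : c₃ < c₁) (hc₄ : 0 ≤ c₄) (hc₄₂ : c₄ < c₂)
    (f g : ℝ → ℝ)
    (hf_cont : ContinuousOn f (Ici c₄)) (hg_cont : ContinuousOn g (Ici c₃))
    (hf_nonneg : ∀ s ∈ Ici c₄, 0 ≤ f s) (hg_nonneg : ∀ s ∈ Ici c₃, 0 ≤ g s)
    (hf_mono : MonotoneOn f (Ici c₄)) (hg_mono : MonotoneOn g (Ici c₃))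
    (hf_pos : ∀ s ∈ Ioi c₄, 0 < f s) (hg_pos : ∀ s ∈ Ioi c₃, 0 < g s)
    (hf_div : ¬ IntegrableOn f (Ici c₄)) (hg_div : ¬ IntegrableOn g (Ici c₃))
    (F G Finv Ginv : ℝ → ℝ)
    (hF : ∀ x, F x = ∫ s in c₄..x, f s) (hG : ∀ x, G x = ∫ θ in c₃..x, g θ)
    (hFinv_mem : ∀ y ∈ Ici (0 : ℝ), Finv y ∈ Ici c₄)
    (hFinv_right : ∀ y ∈ Ici (0 : ℝ), F (Finv y) = y)
    (hFinv_left : ∀ x ∈ Ici c₄, Finv (F x) = x)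
    (hGinv_mem : ∀ y ∈ Ici (0 : ℝ), Ginv y ∈ Ici c₃)
    (hGinv_right : ∀ y ∈ Ici (0 : ℝ), G (Ginv y) = y)
    (hGinv_left : ∀ x ∈ Ici c₃, Ginv (G x) = x)
    (hε : 0 < ε) (hε1 : ε < 1) (hK : 1 < K)
    (hFG1 : ε * G c₁ ≤ F c₂) (hFG2 : F c₂ ≤ K * G c₁)
    (hdiv1 : ¬ IntegrableOn (fun s => 1 / f (Finv (K * G s))) (Ici c₁))
    (hdiv2 : ¬ IntegrableOn (fun θ => 1 / g (Ginv (F θ / ε))) (Ici c₂))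
    (w z : ℝ → ℝ)
    (hw0 : w 0 = c₁) (hz0 : z 0 = c₂)
    (hw_ge : ∀ t ∈ Ico (0 : ℝ) T, c₃ ≤ w t)
    (hz_ge : ∀ t ∈ Ico (0 : ℝ) T, c₄ ≤ z t)
    (hw' : ∀ t ∈ Ico (0 : ℝ) T, HasDerivAt w (f (z t)) t)
    (hz' : ∀ t ∈ Ico (0 : ℝ) T, HasDerivAt z (g (w t)) t) :
    ∃ C : ℝ, ∀ t ∈ Ico (0 : ℝ) T, w t ≤ C ∧ z t ≤ C := by
  have hFfun : F = fun x => ∫ s in c₄..x, f s := funext hF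
  have hGfun : G = fun x => ∫ θ in c₃..x, g θ := funext hG
  subst hFfun
  subst hGfun
  have hK' : (1:ℝ) ≤ ε⁻¹ := by
    have h2 := mul_inv_cancel₀ hε.ne'
    nlinarith [inv_pos.2 hε]
  have hFG' : (∫ θ in c₃..c₁, g θ) ≤ ε⁻¹ * ∫ s in c₄..c₂, f s := by
    have h := hFG1
    simp only at h
    have h2 := mul_inv_cancel₀ hε.ne'
    nlinarith [inv_pos.2 hε, mul_le_mul_of_nonneg_left h (inv_pos.2 hε).le]
  have hdiv2' : ¬ IntegrableOn
      (fun s => 1 / g (Ginv (ε⁻¹ * ∫ θ in c₄..s, f θ))) (Ici c₂) := by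
    simpa [div_eq_inv_mul] using hdiv2
  obtain ⟨C₁, hC₁⟩ := bound_w_aux c₁ c₂ c₃ c₄ K T hc₃₁ hc₄₂ f g hf_cont hg_cont
    hf_nonneg hg_nonneg hf_mono hf_pos hg_pos Finv hFinv_mem
    (fun y hy => hFinv_right y hy) (fun x hx => hFinv_left x hx) hK.le hFG2 hdiv1
    w z hw0 hz0 hw_ge hz_ge hw' hz'
  obtain ⟨C₂, hC₂⟩ := bound_w_aux c₂ c₁ c₄ c₃ ε⁻¹ T hc₄₂ hc₃₁ g f hg_cont hf_cont
    hg_nonneg hf_nonneg hg_mono hg_pos hf_pos Ginv hGinv_mem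
    (fun y hy => hGinv_right y hy) (fun x hx => hGinv_left x hx) hK' hFG' hdiv2'
    z w hz0 hw0 hz_ge hw_ge hz' hw'
  exact ⟨max C₁ C₂, fun t ht =>
    ⟨(hC₁ t ht).trans (le_max_left _ _), (hC₂ t ht).trans (le_max_right _ _)⟩⟩
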